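/- Let G be an m×m real symmetric positive definite matrix, Φ and S two n×m real matrices with Φ G⁻¹ Sᵀ invertible, v ∈ ℝ^m and c ∈ ℝ^n. Then there exists a unique vector N ∈ ℝ^m such that (i) ⟨N, ξ⟩ = 0 for every ξ ∈ ℝ^m with S ξ = 0, and (ii) c + Φ G⁻¹ (v + N) = 0. Moreover, this N is given explicitly by N = −Sᵀ (Φ G⁻¹ Sᵀ)⁻¹ (c + Φ G⁻¹ v). -/
import Mathlib


open Matrix

/-- Generalized principle of release from constraints: with virtual
displacements redefined as `ker S`, where `Φ G⁻¹ Sᵀ` is invertible, there is a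
unique reaction force `N` with `⟨N, ξ⟩ = 0` for all `ξ ∈ ker S` and
`c + Φ G⁻¹ (v + N) = 0`, namely `N = -Sᵀ (Φ G⁻¹ Sᵀ)⁻¹ (c + Φ G⁻¹ v)`. -/
theorem release_from_constraints_general {m n : ℕ}
    (G : Matrix (Fin m) (Fin m) ℝ) (hGsymm : G.IsSymm) (hGpd : G.PosDef)
    (Φ S : Matrix (Fin n) (Fin m) ℝ) (hinv : IsUnit (Φ * G⁻¹ * Sᵀ).det)
    (v : Fin m → ℝ) (c : Fin n → ℝ) :
    (∃! N : Fin m → ℝ,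
        (∀ ξ : Fin m → ℝ, S.mulVec ξ = 0 → N ⬝ᵥ ξ = 0) ∧
        c + Φ.mulVec (G⁻¹.mulVec (v + N)) = 0) ∧
    (∀ N : Fin m → ℝ,
        ((∀ ξ : Fin m → ℝ, S.mulVec ξ = 0 → N ⬝ᵥ ξ = 0) ∧
            c + Φ.mulVec (G⁻¹.mulVec (v + N)) = 0) →
        N = -(Sᵀ.mulVec ((Φ * G⁻¹ * Sᵀ)⁻¹.mulVec (c + Φ.mulVec (G⁻¹.mulVec v))))) := by
  set A := Φ * G⁻¹ * Sᵀ with hA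
  set w := c + Φ.mulVec (G⁻¹.mulVec v) with hw
  set N₀ := -(Sᵀ.mulVec (A⁻¹.mulVec w)) with hN₀
  -- key adjoint identity
  have hkey : ∀ (y : Fin n → ℝ) (ξ : Fin m → ℝ),
      (Sᵀ.mulVec y) ⬝ᵥ ξ = y ⬝ᵥ (S.mulVec ξ) := by
    intro y ξ
    rw [mulVec_transpose, dotProduct_mulVec]
  -- Sᵀ has trivial kernel, thanks to invertibility of A
  have hker : ∀ x : Fin n → ℝ, Sᵀ.mulVec x = 0 → x = 0 := by
    intro x hx
    have h1 : A.mulVec x = 0 := by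
      rw [hA, ← mulVec_mulVec, hx, mulVec_zero]
    have h2 : (A⁻¹ * A).mulVec x = 0 := by
      rw [← mulVec_mulVec, h1, mulVec_zero]
    rwa [Matrix.nonsing_inv_mul A hinv, one_mulVec] at h2
  -- S * Sᵀ is invertible
  have hSS : IsUnit (S * Sᵀ).det := by
    rw [← isUnit_iff_isUnit_det, ← mulVec_injective_iff_isUnit]
    intro x y hxy
    have h0 : (S * Sᵀ).mulVec (x - y) = 0 := by
      rw [mulVec_sub, hxy, sub_self]
    have h1 : (Sᵀ.mulVec (x - y)) ⬝ᵥ (Sᵀ.mulVec (x - y)) = 0 := by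
      rw [hkey, mulVec_mulVec, h0, dotProduct_zero]
    have h2 : Sᵀ.mulVec (x - y) = 0 := dotProduct_self_eq_zero.mp h1
    have := hker _ h2
    exact sub_eq_zero.mp this
  -- any N orthogonal to ker S is in the range of Sᵀ
  have hrange : ∀ N : Fin m → ℝ, (∀ ξ : Fin m → ℝ, S.mulVec ξ = 0 → N ⬝ᵥ ξ = 0) →
      ∃ μ : Fin n → ℝ, N = Sᵀ.mulVec μ := by
    intro N hN
    refine ⟨(S * Sᵀ)⁻¹.mulVec (S.mulVec N), ?_⟩
    set μ := (S * Sᵀ)⁻¹.mulVec (S.mulVec N) with hμ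
    set ξ := N - Sᵀ.mulVec μ with hξ
    have hSξ : S.mulVec ξ = 0 := by
      rw [hξ, mulVec_sub, hμ, mulVec_mulVec, mulVec_mulVec,
        Matrix.mul_nonsing_inv _ hSS, one_mulVec, sub_self]
    have h1 : ξ ⬝ᵥ ξ = 0 := by
      rw [hξ]
      rw [show (N - Sᵀ.mulVec μ) ⬝ᵥ ξ = N ⬝ᵥ ξ - (Sᵀ.mulVec μ) ⬝ᵥ ξ from sub_dotProduct _ _ _]
      rw [hN ξ hSξ, hkey, hSξ, dotProduct_zero, sub_self]
    have h2 : ξ = 0 := dotProduct_self_eq_zero.mp h1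
    have := sub_eq_zero.mp h2
    exact this
  -- uniqueness
  have huniq : ∀ N : Fin m → ℝ,
      ((∀ ξ : Fin m → ℝ, S.mulVec ξ = 0 → N ⬝ᵥ ξ = 0) ∧
        c + Φ.mulVec (G⁻¹.mulVec (v + N)) = 0) → N = N₀ := by
    rintro N ⟨hN1, hN2⟩
    obtain ⟨μ, rfl⟩ := hrange N hN1
    have hexp : c + Φ.mulVec (G⁻¹.mulVec (v + Sᵀ.mulVec μ)) = w + A.mulVec μ := by
      rw [hw, hA, mulVec_add, mulVec_add, add_assoc, mulVec_mulVec, mulVec_mulVec, mulVec_mulVec]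
    rw [hexp] at hN2
    have hμA : A.mulVec μ = -w := by
      rw [add_comm] at hN2
      exact eq_neg_of_add_eq_zero_left hN2
    have hμeq : μ = -(A⁻¹.mulVec w) := by
      have h1 : (A⁻¹ * A).mulVec μ = A⁻¹.mulVec (-w) := by
        rw [← mulVec_mulVec, hμA]
      rwa [Matrix.nonsing_inv_mul A hinv, one_mulVec, mulVec_neg] at h1
    rw [hμeq, mulVec_neg, hN₀]
  -- existence
  have hex : (∀ ξ : Fin m → ℝ, S.mulVec ξ = 0 → N₀ ⬝ᵥ ξ = 0) ∧
      c + Φ.mulVec (G⁻¹.mulVec (v + N₀)) = 0 := by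
    constructor
    · intro ξ hξ
      rw [hN₀, neg_dotProduct, hkey, hξ, dotProduct_zero, neg_zero]
    · simp only [hN₀, mulVec_add, mulVec_neg, mulVec_mulVec]
      rw [show Φ * (G⁻¹ * (Sᵀ * A⁻¹)) = 1 from by
          rw [← Matrix.mul_assoc, ← Matrix.mul_assoc, ← hA, Matrix.mul_nonsing_inv A hinv],
        one_mulVec, hw]
      simp only [mulVec_mulVec]
      abel
  exact ⟨⟨N₀, hex, fun N h => huniq N h⟩, huniq⟩
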